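/- No set of n-2 entries above the diagonal determines a consistent n×n pairwise comparison matrix: for every set B of index pairs (i,j) with i < j and |B| = n-2, there exist two distinct consistent n×n PC matrices agreeing on all entries indexed by B (for n ≥ 2). -/

import Mathlib

open SimpleGraph

/-- No set of `n - 2` above-diagonal entries determines a consistent `n × n`
PC matrix. -/
theorem not_generated_by_card_sub_two (n : ℕ) (hn : 2 ≤ n)
    (B : Finset (Fin n × Fin n)) (hB : ∀ p ∈ B, p.1 < p.2)
    (hcard : B.card = n - 2) :
    ∃ M M' : Matrix (Fin n) (Fin n) ℝ,
      (∀ i j, 0 < M i j) ∧ (∀ i j k, M i j * M j k = M i k) ∧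
      (∀ i j, 0 < M' i j) ∧ (∀ i j k, M' i j * M' j k = M' i k) ∧
      (∀ p ∈ B, M p.1 p.2 = M' p.1 p.2) ∧ M ≠ M' := by
  classical
  set G : SimpleGraph (Fin n) :=
    { Adj := fun i j => i ≠ j ∧ ((i, j) ∈ B ∨ (j, i) ∈ B)
      symm := ⟨fun i j h => ⟨h.1.symm, h.2.symm⟩⟩
      loopless := ⟨fun i h => h.1 rfl⟩ } with hG
  have hnpos : 0 < n := by omega
  let z : Fin n := ⟨0, hnpos⟩
  -- there is a vertex not reachable from z
  have hdisc : ∃ w : Fin n, ¬ G.Reachable z w := by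
    by_contra hcon
    push_neg at hcon
    -- injection from nonzero vertices into B
    have claim : ∀ w : Fin n, w ≠ z → ∃ p ∈ B,
        (p.1 = w ∧ G.dist p.2 z < G.dist w z) ∨
        (p.2 = w ∧ G.dist p.1 z < G.dist w z) := by
      intro w hw
      have hr : G.Reachable w z := (hcon w).symm
      have hd : 0 < G.dist w z := hr.pos_dist_of_ne hw
      obtain ⟨q, hq⟩ := hr.exists_walk_length_eq_dist
      have hqn : ¬ q.Nil := by
        intro h
        rw [SimpleGraph.Walk.nil_iff_length_eq] at h
        omega
      have hadj : G.Adj w (q.getVert 1) := q.adj_snd hqn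
      have hlt : G.dist (q.getVert 1) z < G.dist w z := by
        have : G.dist (q.getVert 1) z ≤ q.tail.length := G.dist_le q.tail
        have h1 := SimpleGraph.Walk.length_tail_add_one hqn
        omega
      rcases hadj.2 with h | h
      · exact ⟨(w, q.getVert 1), h, Or.inl ⟨rfl, hlt⟩⟩
      · exact ⟨(q.getVert 1, w), h, Or.inr ⟨rfl, hlt⟩⟩
    choose! f hfB hf using claim
    have hinj : Set.InjOn f ((Finset.univ.erase z) : Finset (Fin n)) := by
      intro a ha b hb hab
      simp only [Finset.coe_erase, Set.mem_diff, Finset.mem_erase] at ha hb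
      have ha' := hf a (by simpa using ha)
      have hb' := hf b (by simpa using hb)
      rw [hab] at ha'
      rcases ha' with ⟨h1, h2⟩ | ⟨h1, h2⟩ <;> rcases hb' with ⟨h3, h4⟩ | ⟨h3, h4⟩
      · exact h1.symm.trans h3
      · rw [h1] at h4; rw [h3] at h2; omega
      · rw [h1] at h4; rw [h3] at h2; omega
      · exact h1.symm.trans h3
    have hle : (Finset.univ.erase z).card ≤ B.card := by
      apply Finset.card_le_card_of_injOn f
      · intro a ha
        exact hfB a (Finset.mem_erase.mp ha).1
      · exact hinj
    have : (Finset.univ.erase z).card = n - 1 := by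
      rw [Finset.card_erase_of_mem (Finset.mem_univ z), Finset.card_univ, Fintype.card_fin]
    omega
  obtain ⟨w, hw⟩ := hdisc
  let f : Fin n → ℝ := fun k => if G.Reachable z k then 1 else 2
  have hfpos : ∀ k, 0 < f k := by
    intro k; simp only [f]; split <;> norm_num
  refine ⟨fun i j => f i / f j, fun _ _ => 1, ?_, ?_, ?_, ?_, ?_, ?_⟩
  · intro i j; exact div_pos (hfpos i) (hfpos j)
  · intro i j k
    field_simp [(hfpos j).ne', (hfpos k).ne']
  · intro i j; norm_num
  · intro i j k; norm_num
  · intro p hp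
    have hadj : G.Adj p.1 p.2 := ⟨(hB p hp).ne, Or.inl (by simpa using hp)⟩
    have : f p.1 = f p.2 := by
      simp only [f]
      by_cases h : G.Reachable z p.1
      · rw [if_pos h, if_pos (h.trans hadj.reachable)]
      · rw [if_neg h, if_neg (fun h' => h (h'.trans hadj.symm.reachable))]
    show f p.1 / f p.2 = 1
    rw [this, div_self (hfpos p.2).ne']
  · intro heq
    have := congrFun (congrFun heq z) w
    simp only [f] at this
    rw [if_pos (SimpleGraph.Reachable.refl z), if_neg hw] at this
    norm_num at this
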